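/- Let U ⊆ ℝⁿ be open, x ∈ ∂U, and suppose there exist δ > 0, a unit vector k, and a Lipschitz function f: ℝⁿ⁻¹ → ℝ with f(0) = 0 such that for all y with |y−x| < δ, y ∈ U iff k·(y−x) < f(P(y−x)), where P is orthogonal projection onto k⊥ (identified with ℝⁿ⁻¹). Then there exists an open cone C̊ (namely the cone of opening determined by the Lipschitz constant of f) such that for every boundary point z ∈ ∂U ∩ B(x, δ): (z − C̊) ∩ B(x, δ) ⊆ U and (z + C̊) ∩ B(x, δ) ⊆ ℝⁿ \ closure(U). -/

import Mathlib

open Set Topology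

/-- Append a last coordinate to a vector of `ℝⁿ`, giving a vector of `ℝⁿ⁺¹`. -/
noncomputable def snocE {n : ℕ} (v : EuclideanSpace ℝ (Fin n)) (a : ℝ) :
    EuclideanSpace ℝ (Fin (n + 1)) :=
  WithLp.toLp 2 (Fin.snoc (fun j => v j) a)

/-- Projection of `ℝⁿ⁺¹` onto the first `n` coordinates. -/
noncomputable def projE {n : ℕ} (y : EuclideanSpace ℝ (Fin (n + 1))) :
    EuclideanSpace ℝ (Fin n) :=
  WithLp.toLp 2 (fun i => y i.castSucc)

/-- The open cone `C̊ = ℝ_{>0} · (B_{ℝⁿ}(0,1) × {K})` with axis the last coordinate. -/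
def coneSet (n : ℕ) (K : ℝ) : Set (EuclideanSpace ℝ (Fin (n + 1))) :=
  {c | ∃ t : ℝ, 0 < t ∧ ∃ v : EuclideanSpace ℝ (Fin n), ‖v‖ < 1 ∧ c = t • snocE v K}

lemma abs_apply_le_norm {m : ℕ} (y : EuclideanSpace ℝ (Fin m)) (i : Fin m) :
    |y i| ≤ ‖y‖ := by
  rw [EuclideanSpace.norm_eq]
  calc |y i| = √(|y i| ^ 2) := by rw [Real.sqrt_sq_eq_abs, abs_abs]
  _ ≤ _ := by
      apply Real.sqrt_le_sqrt
      have := Finset.single_le_sum (f := fun j => ‖y j‖ ^ 2)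
        (fun j _ => by positivity) (Finset.mem_univ i)
      simpa using this

lemma norm_projE_le {n : ℕ} (y : EuclideanSpace ℝ (Fin (n + 1))) :
    ‖projE y‖ ≤ ‖y‖ := by
  rw [EuclideanSpace.norm_eq, EuclideanSpace.norm_eq]
  apply Real.sqrt_le_sqrt
  rw [Fin.sum_univ_castSucc]
  have : (0:ℝ) ≤ ‖y (Fin.last n)‖ ^ 2 := by positivity
  simp only [projE, PiLp.toLp_apply]
  linarith [this]

lemma projE_sub {n : ℕ} (y z : EuclideanSpace ℝ (Fin (n + 1))) :
    projE (y - z) = projE y - projE z := by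
  ext i; simp [projE, PiLp.sub_apply]

lemma projE_add {n : ℕ} (y z : EuclideanSpace ℝ (Fin (n + 1))) :
    projE (y + z) = projE y + projE z := by
  ext i; simp [projE, PiLp.add_apply]

lemma projE_smul {n : ℕ} (t : ℝ) (y : EuclideanSpace ℝ (Fin (n + 1))) :
    projE (t • y) = t • projE y := by
  ext i; simp [projE, PiLp.smul_apply]

lemma projE_snocE {n : ℕ} (v : EuclideanSpace ℝ (Fin n)) (a : ℝ) :
    projE (snocE v a) = v := by
  ext i; simp [projE, snocE, Fin.snoc_castSucc]

lemma snocE_last {n : ℕ} (v : EuclideanSpace ℝ (Fin n)) (a : ℝ) :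
    snocE v a (Fin.last n) = a := by
  simp [snocE, Fin.snoc_last]

lemma lipschitz_projE {n : ℕ} : LipschitzWith 1 (projE (n := n)) :=
  LipschitzWith.of_dist_le_mul fun a b => by
    rw [dist_eq_norm, dist_eq_norm, ← projE_sub, NNReal.coe_one, one_mul]
    exact norm_projE_le _

lemma lipschitz_last {m : ℕ} (i : Fin m) :
    LipschitzWith 1 (fun y : EuclideanSpace ℝ (Fin m) => y i) :=
  LipschitzWith.of_dist_le_mul fun a b => by
    rw [Real.dist_eq, dist_eq_norm, NNReal.coe_one, one_mul]
    have : a i - b i = (a - b) i := by simp [PiLp.sub_apply]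
    rw [this]
    exact abs_apply_le_norm _ _

/-- If near `x ∈ ∂U` the open set `U` is characterized by the Lipschitz-graph condition
`y ∈ U ↔ (y−x)ⁿ < f(P(y−x))` (axis `k` taken, after a rotation, to be the last coordinate
direction), then there is an open cone `C̊` (determined by the Lipschitz constant of `f`)
giving interior and exterior cone conditions at every boundary point `z ∈ ∂U ∩ B(x,δ)`. -/
theorem lipschitz_graph_implies_proper_cones {n : ℕ}
    (U : Set (EuclideanSpace ℝ (Fin (n + 1)))) (hU : IsOpen U)
    (x : EuclideanSpace ℝ (Fin (n + 1))) (hx : x ∈ frontier U)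
    (δ : ℝ) (hδ : 0 < δ) (K : NNReal) (hK : 0 < K)
    (f : EuclideanSpace ℝ (Fin n) → ℝ) (hf : LipschitzWith K f) (hf0 : f 0 = 0)
    (hgraph : ∀ y : EuclideanSpace ℝ (Fin (n + 1)), dist y x < δ →
      (y ∈ U ↔ y (Fin.last n) - x (Fin.last n) < f (projE (y - x)))) :
    ∃ Kc : ℝ, 0 < Kc ∧ ∀ z ∈ frontier U ∩ Metric.ball x δ,
      ((fun c => z - c) '' coneSet n Kc) ∩ Metric.ball x δ ⊆ U ∧
      ((fun c => z + c) '' coneSet n Kc) ∩ Metric.ball x δ ⊆ (closure U)ᶜ := by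
  have hK' : (0:ℝ) < K := hK
  refine ⟨K, hK', ?_⟩
  rintro z ⟨hzf, hzb⟩
  have hzcl : z ∈ closure U := hzf.1
  have hznU : z ∉ U := by
    intro h
    exact hzf.2 (by simpa [hU.interior_eq] using h)
  set p : EuclideanSpace ℝ (Fin n) := projE (z - x) with hp
  set a : ℝ := z (Fin.last n) - x (Fin.last n) with ha
  have hzb' : dist z x < δ := Metric.mem_ball.mp hzb
  have h_ge : f p ≤ a := by
    by_contra h
    exact hznU ((hgraph z hzb').mpr (not_le.mp h))
  have h_le : a ≤ f p := by
    set g : EuclideanSpace ℝ (Fin (n+1)) → ℝ :=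
      fun y => y (Fin.last n) - x (Fin.last n) - f (projE (y - x)) with hg
    have hgc : Continuous g := by
      apply Continuous.sub
      · exact ((lipschitz_last (Fin.last n)).continuous).sub continuous_const
      · exact hf.continuous.comp (lipschitz_projE.continuous.comp
          (continuous_id.sub continuous_const))
    have hcl : z ∈ closure (U ∩ Metric.ball x δ) := by
      have := Metric.isOpen_ball.inter_closure
        (s := Metric.ball x δ) (t := U) ⟨hzb, hzcl⟩
      simpa [Set.inter_comm] using this
    have hsub : U ∩ Metric.ball x δ ⊆ {y | g y ≤ 0} := by
      rintro y ⟨hyU, hyb⟩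
      have := (hgraph y (Metric.mem_ball.mp hyb)).mp hyU
      simp only [g, Set.mem_setOf_eq]
      linarith
    have : z ∈ {y | g y ≤ 0} :=
      (isClosed_le hgc continuous_const).closure_subset
        ((closure_mono hsub) hcl)
    simp only [g, Set.mem_setOf_eq] at this
    rw [ha, hp]
    linarith
  constructor
  · rintro y ⟨⟨c, ⟨t, ht, v, hv, rfl⟩, rfl⟩, hyb⟩
    rw [hgraph _ (Metric.mem_ball.mp hyb)]
    show (z - t • snocE v (K:ℝ)) (Fin.last n) - x (Fin.last n)
      < f (projE (z - t • snocE v (K:ℝ) - x))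
    have e1 : (z - t • snocE v (K:ℝ)) (Fin.last n) = z (Fin.last n) - t * K := by
      simp [PiLp.sub_apply, PiLp.smul_apply, snocE_last, smul_eq_mul]
    have e2 : projE (z - t • snocE v (K:ℝ) - x) = p - t • v := by
      rw [show z - t • snocE v (K:ℝ) - x = (z - x) - t • snocE v (K:ℝ) by abel,
        projE_sub, projE_smul, projE_snocE]
    rw [e1, e2]
    have hLip : f p - f (p - t • v) ≤ K * ‖t • v‖ := by
      have h1 := hf.dist_le_mul p (p - t • v)
      rw [dist_eq_norm, dist_eq_norm, show p - (p - t • v) = t • v by abel] at h1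
      calc f p - f (p - t • v) ≤ |f p - f (p - t • v)| := le_abs_self _
        _ ≤ K * ‖t • v‖ := by rwa [← Real.dist_eq]
    have hnv : ‖t • v‖ < t := by
      rw [norm_smul, Real.norm_eq_abs, abs_of_pos ht]
      calc t * ‖v‖ < t * 1 := mul_lt_mul_of_pos_left hv ht
        _ = t := mul_one t
    have h2 : (K:ℝ) * ‖t • v‖ < K * t := mul_lt_mul_of_pos_left hnv hK'
    have h3 := hLip.trans_lt h2
    linarith [h_le]
  · rintro y' ⟨⟨c, ⟨t, ht, v, hv, rfl⟩, rfl⟩, hyb⟩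
    set y := z + t • snocE v (K:ℝ) with hy
    have e1 : y (Fin.last n) = z (Fin.last n) + t * K := by
      simp [hy, PiLp.add_apply, PiLp.smul_apply, snocE_last, smul_eq_mul]
    have e2 : projE (y - x) = p + t • v := by
      rw [hy, show z + t • snocE v (K:ℝ) - x = (z - x) + t • snocE v (K:ℝ) by abel,
        projE_add, projE_smul, projE_snocE]
    set ε : ℝ := y (Fin.last n) - x (Fin.last n) - f (projE (y - x)) with hε
    have hεpos : 0 < ε := by
      have hLip : f (p + t • v) - f p ≤ K * ‖t • v‖ := by
        have h1 := hf.dist_le_mul (p + t • v) p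
        rw [dist_eq_norm, dist_eq_norm, show p + t • v - p = t • v by abel] at h1
        calc f (p + t • v) - f p ≤ |f (p + t • v) - f p| := le_abs_self _
          _ ≤ K * ‖t • v‖ := by rwa [← Real.dist_eq]
      have hnv : ‖t • v‖ < t := by
        rw [norm_smul, Real.norm_eq_abs, abs_of_pos ht]
        calc t * ‖v‖ < t * 1 := mul_lt_mul_of_pos_left hv ht
          _ = t := mul_one t
      have h2 : (K:ℝ) * ‖t • v‖ < K * t := mul_lt_mul_of_pos_left hnv hK'
      have h3 := hLip.trans_lt h2
      rw [hε, e1, e2]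
      linarith [h_ge]
    set r : ℝ := ε / (1 + K) with hr
    have hrpos : 0 < r := div_pos hεpos (by linarith)
    rw [Set.mem_compl_iff]
    intro hyclosure
    have hopen : IsOpen (Metric.ball y r ∩ Metric.ball x δ) :=
      Metric.isOpen_ball.inter Metric.isOpen_ball
    have hymem : y ∈ Metric.ball y r ∩ Metric.ball x δ :=
      ⟨Metric.mem_ball_self hrpos, hyb⟩
    obtain ⟨w, hwb, hwU⟩ :=
      (mem_closure_iff.mp hyclosure) _ hopen hymem
    obtain ⟨hwy, hwx⟩ := hwb
    have hw1 : |w (Fin.last n) - y (Fin.last n)| ≤ dist w y := by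
      have := (lipschitz_last (m := n+1) (Fin.last n)).dist_le_mul w y
      rwa [Real.dist_eq, NNReal.coe_one, one_mul] at this
    have hw2 : |f (projE (w - x)) - f (projE (y - x))| ≤ K * dist w y := by
      have h1 := hf.dist_le_mul (projE (w - x)) (projE (y - x))
      have h2 : dist (projE (w - x)) (projE (y - x)) ≤ dist w y := by
        have h3 := lipschitz_projE.dist_le_mul (w - x) (y - x)
        rw [NNReal.coe_one, one_mul] at h3
        refine h3.trans ?_
        rw [dist_eq_norm, dist_eq_norm, show w - x - (y - x) = w - y by abel]
      calc |f (projE (w - x)) - f (projE (y - x))|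
          = dist (f (projE (w - x))) (f (projE (y - x))) := (Real.dist_eq _ _).symm
        _ ≤ K * dist (projE (w - x)) (projE (y - x)) := h1
        _ ≤ K * dist w y := by
            apply mul_le_mul_of_nonneg_left h2
            positivity
    have hdw : dist w y < r := Metric.mem_ball.mp hwy
    have hwlt := (hgraph w (Metric.mem_ball.mp hwx)).mp hwU
    have hrK : dist w y * (1 + K) < ε := by
      calc dist w y * (1 + K) < r * (1 + K) := by
            apply mul_lt_mul_of_pos_right hdw; linarith
        _ = ε := by rw [hr]; field_simp
    have h3 := (abs_le.mp hw1).1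
    have h4 := (abs_le.mp hw2).2
    have hd0 := dist_nonneg (x := w) (y := y)
    rw [hε] at hrK
    nlinarith
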